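/- The global minimization of a CPWA function h(x) = Σₖ ξₖ max{⟨a_{k,i},x⟩ + b_{k,i} : 1 ≤ i ≤ Iₖ} over the box {x : 0 ≤ x ≤ x̄} is equivalent to the mixed-integer linear program where each term with ξₖ = 1 is replaced by an epigraph variable λₖ with constraints ⟨a_{k,i},x⟩ + b_{k,i} ≤ λₖ, and each term with ξₖ = −1 is replaced by a variable ζₖ with slack variables δ_{k,i} ∈ [0, M_{k,i}(1−ι_{k,i})], binary variables ι_{k,i} ∈ {0,1} with Σᵢ ι_{k,i} = 1, and constraints ⟨a_{k,i},x⟩ + b_{k,i} + δ_{k,i} = ζₖ, where M_{k,i} is the maximum of ⟨a_{k,i'} − a_{k,i}, x⟩ + b_{k,i'} − b_{k,i} over the box and i' ≠ i. Every minimizer of one problem yields a feasible point of the other with equal objective value, so the two problems have the same optimal value. -/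

import Mathlib

section MILP

variable {d K : ℕ}

/-- Feasibility for the MILP reformulation of minimizing a CPWA function over a box. -/
def MILPFeasible (I : Fin K → ℕ) (ξ : Fin K → ℝ)
    (a : (k : Fin K) → Fin (I k + 1) → Fin d → ℝ)
    (b : (k : Fin K) → Fin (I k + 1) → ℝ)
    (xbar : Fin d → ℝ) (M : (k : Fin K) → Fin (I k + 1) → ℝ)
    (x : Fin d → ℝ) (lam zeta : Fin K → ℝ)
    (delta iota : (k : Fin K) → Fin (I k + 1) → ℝ) : Prop :=
  (∀ j, 0 ≤ x j ∧ x j ≤ xbar j) ∧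
  (∀ k, ξ k = 1 → ∀ i, (∑ j, a k i j * x j) + b k i ≤ lam k) ∧
  (∀ k, ξ k = -1 →
    (∀ i, iota k i = 0 ∨ iota k i = 1) ∧
    (∑ i, iota k i) = 1 ∧
    (∀ i, (∑ j, a k i j * x j) + b k i + delta k i = zeta k) ∧
    (∀ i, 0 ≤ delta k i ∧ delta k i ≤ M k i * (1 - iota k i)))

/-- Objective of the MILP: Σ_{ξₖ=1} λₖ − Σ_{ξₖ=−1} ζₖ. -/
noncomputable def MILPObj (ξ : Fin K → ℝ) (lam zeta : Fin K → ℝ) : ℝ :=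
  (∑ k ∈ Finset.univ.filter (fun k => ξ k = 1), lam k)
    - ∑ k ∈ Finset.univ.filter (fun k => ξ k = -1), zeta k

/-- Global minimization of a CPWA function over a box is equivalent to the MILP:
every box point is matched by a feasible MILP point with equal objective, every MILP
minimizer has objective equal to the CPWA value at its x-part, and the optimal
values coincide. -/
theorem stmt11 (I : Fin K → ℕ) (ξ : Fin K → ℝ)
    (a : (k : Fin K) → Fin (I k + 1) → Fin d → ℝ)
    (b : (k : Fin K) → Fin (I k + 1) → ℝ)
    (hξ : ∀ k, ξ k = 1 ∨ ξ k = -1)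
    (h : (Fin d → ℝ) → ℝ)
    (hdef : ∀ x, h x = ∑ k, ξ k * (Finset.univ.sup' Finset.univ_nonempty
      fun i => (∑ j, a k i j * x j) + b k i))
    (hbdd : ∃ L : ℝ, ∀ x : Fin d → ℝ, (∀ j, 0 ≤ x j) → L ≤ h x)
    (xbar : Fin d → ℝ) (hxbar : ∀ j, 0 < xbar j)
    (M : (k : Fin K) → Fin (I k + 1) → ℝ)
    (hM : ∀ k i, M k i = sSup {v : ℝ | ∃ (x : Fin d → ℝ) (i' : Fin (I k + 1)),
        (∀ j, 0 ≤ x j ∧ x j ≤ xbar j) ∧ i' ≠ i ∧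
        v = (∑ j, (a k i' j - a k i j) * x j) + (b k i' - b k i)}) :
    (∀ x : Fin d → ℝ, (∀ j, 0 ≤ x j ∧ x j ≤ xbar j) →
      ∃ lam zeta delta iota, MILPFeasible I ξ a b xbar M x lam zeta delta iota ∧
        MILPObj ξ lam zeta = h x) ∧
    (∀ x lam zeta delta iota, MILPFeasible I ξ a b xbar M x lam zeta delta iota →
      (∀ x' lam' zeta' delta' iota',
        MILPFeasible I ξ a b xbar M x' lam' zeta' delta' iota' →
        MILPObj ξ lam zeta ≤ MILPObj ξ lam' zeta') →
      MILPObj ξ lam zeta = h x) ∧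
    sInf {v : ℝ | ∃ x : Fin d → ℝ, (∀ j, 0 ≤ x j ∧ x j ≤ xbar j) ∧ v = h x} =
      sInf {v : ℝ | ∃ x lam zeta delta iota,
        MILPFeasible I ξ a b xbar M x lam zeta delta iota ∧
        v = MILPObj ξ lam zeta} := by
  classical
  obtain ⟨L, hL⟩ := hbdd
  -- splitting lemma for sums with ξ ∈ {1, -1}
  have hsplit : ∀ s : Fin K → ℝ,
      (∑ k, ξ k * s k) =
      (∑ k ∈ Finset.univ.filter (fun k => ξ k = 1), s k)
        - ∑ k ∈ Finset.univ.filter (fun k => ξ k = -1), s k := by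
    intro s
    have h1 : (∑ k ∈ Finset.univ.filter (fun k => ξ k = 1), ξ k * s k)
        + ∑ k ∈ Finset.univ.filter (fun k => ¬ ξ k = 1), ξ k * s k
          = ∑ k, ξ k * s k :=
      Finset.sum_filter_add_sum_filter_not _ _ _
    have hfe : Finset.univ.filter (fun k => ¬ ξ k = 1)
        = Finset.univ.filter (fun k => ξ k = -1) := by
      ext k
      simp only [Finset.mem_filter, Finset.mem_univ, true_and]
      rcases hξ k with hk | hk <;> simp [hk] <;> norm_num
    have hp : (∑ k ∈ Finset.univ.filter (fun k => ξ k = 1), ξ k * s k)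
        = ∑ k ∈ Finset.univ.filter (fun k => ξ k = 1), s k :=
      Finset.sum_congr rfl fun k hk => by
        rw [(Finset.mem_filter.mp hk).2, one_mul]
    have hn : (∑ k ∈ Finset.univ.filter (fun k => ξ k = -1), ξ k * s k)
        = -∑ k ∈ Finset.univ.filter (fun k => ξ k = -1), s k := by
      rw [← Finset.sum_neg_distrib]
      exact Finset.sum_congr rfl fun k hk => by
        rw [(Finset.mem_filter.mp hk).2]; ring
    rw [← h1, hfe, hp, hn]
    ring
  -- the M-defining sets are bounded above
  have hSbdd : ∀ k i, BddAbove {v : ℝ | ∃ (x : Fin d → ℝ) (i' : Fin (I k + 1)),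
      (∀ j, 0 ≤ x j ∧ x j ≤ xbar j) ∧ i' ≠ i ∧
      v = (∑ j, (a k i' j - a k i j) * x j) + (b k i' - b k i)} := by
    intro k i
    refine ⟨Finset.univ.sup' Finset.univ_nonempty
      (fun i' => (∑ j, |a k i' j - a k i j| * xbar j) + (b k i' - b k i)), ?_⟩
    rintro v ⟨x, i', hx, hne, rfl⟩
    refine le_trans ?_ (Finset.le_sup' _ (Finset.mem_univ i'))
    refine add_le_add (Finset.sum_le_sum fun j _ => ?_) le_rfl
    calc (a k i' j - a k i j) * x j
        ≤ |a k i' j - a k i j| * x j :=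
          mul_le_mul_of_nonneg_right (le_abs_self _) (hx j).1
      _ ≤ |a k i' j - a k i j| * xbar j :=
          mul_le_mul_of_nonneg_left (hx j).2 (abs_nonneg _)
  -- differences of affine pieces are at most M
  have hleM : ∀ k i i' (x : Fin d → ℝ), (∀ j, 0 ≤ x j ∧ x j ≤ xbar j) → i' ≠ i →
      ((∑ j, a k i' j * x j) + b k i') - ((∑ j, a k i j * x j) + b k i) ≤ M k i := by
    intro k i i' x hx hne
    rw [hM]
    refine le_csSup (hSbdd k i) ⟨x, i', hx, hne, ?_⟩
    rw [Finset.sum_congr rfl (fun j _ => sub_mul (a k i' j) (a k i j) (x j)),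
      Finset.sum_sub_distrib]
    ring
  -- Part 1 : every box point yields a feasible point with equal objective
  have key1 : ∀ x : Fin d → ℝ, (∀ j, 0 ≤ x j ∧ x j ≤ xbar j) →
      ∃ lam zeta delta iota, MILPFeasible I ξ a b xbar M x lam zeta delta iota ∧
        MILPObj ξ lam zeta = h x := by
    intro x hx
    have hex : ∀ k : Fin K, ∃ i0 ∈ Finset.univ,
        (Finset.univ.sup' Finset.univ_nonempty
          fun i : Fin (I k + 1) => (∑ j, a k i j * x j) + b k i)
        = (∑ j, a k i0 j * x j) + b k i0 :=
      fun k => Finset.exists_mem_eq_sup' Finset.univ_nonempty _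
    choose i0 _ hi0 using hex
    set s : Fin K → ℝ := fun k => Finset.univ.sup' Finset.univ_nonempty
      (fun i : Fin (I k + 1) => (∑ j, a k i j * x j) + b k i) with hs
    refine ⟨s, s, fun k i => s k - ((∑ j, a k i j * x j) + b k i),
      fun k i => if i = i0 k then 1 else 0, ⟨hx, ?_, ?_⟩, ?_⟩
    · intro k _ i
      exact Finset.le_sup' (fun i => (∑ j, a k i j * x j) + b k i) (Finset.mem_univ i)
    · intro k _
      refine ⟨fun i => by by_cases hik : i = i0 k <;> simp [hik],
        by simp, fun i => by ring, fun i => ⟨?_, ?_⟩⟩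
      · exact sub_nonneg.mpr
          (Finset.le_sup' (fun i => (∑ j, a k i j * x j) + b k i) (Finset.mem_univ i))
      · by_cases hik : i = i0 k
        · subst hik
          simp only [if_pos rfl, sub_self, mul_zero]
          rw [hs]
          simp [hi0 k]
        · simp only [if_neg hik, sub_zero, mul_one]
          have := hleM k i (i0 k) x hx (Ne.symm hik)
          have h0 : s k = (∑ j, a k (i0 k) j * x j) + b k (i0 k) := hi0 k
          linarith
    · show MILPObj ξ s s = h x
      rw [hdef x]
      have : (∑ k, ξ k * (Finset.univ.sup' Finset.univ_nonempty
          fun i => (∑ j, a k i j * x j) + b k i)) = ∑ k, ξ k * s k := rfl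
      rw [this, hsplit s]
      rfl
  -- for any feasible point, the objective is at least h x
  have keyGE : ∀ x lam zeta delta iota,
      MILPFeasible I ξ a b xbar M x lam zeta delta iota →
      h x ≤ MILPObj ξ lam zeta := by
    rintro x lam zeta delta iota ⟨hx, hpos, hneg⟩
    rw [hdef x, hsplit]
    unfold MILPObj
    have h1 : ∀ k ∈ Finset.univ.filter (fun k => ξ k = 1),
        (Finset.univ.sup' Finset.univ_nonempty
          fun i : Fin (I k + 1) => (∑ j, a k i j * x j) + b k i) ≤ lam k := by
      intro k hk
      exact Finset.sup'_le _ _ fun i _ => hpos k (Finset.mem_filter.mp hk).2 i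
    have h2 : ∀ k ∈ Finset.univ.filter (fun k => ξ k = -1),
        zeta k = (Finset.univ.sup' Finset.univ_nonempty
          fun i : Fin (I k + 1) => (∑ j, a k i j * x j) + b k i) := by
      intro k hk
      obtain ⟨hio01, hiosum, heqz, hdel⟩ := hneg k (Finset.mem_filter.mp hk).2
      have hex1 : ∃ i1, iota k i1 = 1 := by
        by_contra hcon
        push_neg at hcon
        have hall : ∀ i, iota k i = 0 := fun i => (hio01 i).resolve_right (hcon i)
        rw [Finset.sum_congr rfl (fun i _ => hall i)] at hiosum
        simp at hiosum
      obtain ⟨i1, hi1⟩ := hex1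
      have hd0 : delta k i1 = 0 := by
        have := (hdel i1).2
        rw [hi1] at this
        have := (hdel i1).1
        nlinarith [(hdel i1).2]
      refine le_antisymm ?_ ?_
      · rw [← heqz i1, hd0, add_zero]
        exact Finset.le_sup' (fun i => (∑ j, a k i j * x j) + b k i) (Finset.mem_univ i1)
      · refine Finset.sup'_le _ _ fun i _ => ?_
        rw [← heqz i]
        have := (hdel i).1
        linarith
    have hzeq : (∑ k ∈ Finset.univ.filter (fun k => ξ k = -1), zeta k)
        = ∑ k ∈ Finset.univ.filter (fun k => ξ k = -1),
            (Finset.univ.sup' Finset.univ_nonempty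
              fun i : Fin (I k + 1) => (∑ j, a k i j * x j) + b k i) :=
      Finset.sum_congr rfl h2
    have hlsum := Finset.sum_le_sum h1
    linarith [hzeq, hlsum]
  obtain ⟨hx0⟩ : Nonempty True := ⟨trivial⟩
  -- assemble the three parts
  refine ⟨key1, ?_, ?_⟩
  · intro x lam zeta delta iota hfeas hmin
    obtain ⟨lam', zeta', delta', iota', hfeas', hobj'⟩ := key1 x hfeas.1
    have h1 := hmin x lam' zeta' delta' iota' hfeas'
    have h2 := keyGE x lam zeta delta iota hfeas
    linarith [h1, h2, hobj'.le, hobj'.ge]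
  · set A := {v : ℝ | ∃ x : Fin d → ℝ, (∀ j, 0 ≤ x j ∧ x j ≤ xbar j) ∧ v = h x} with hA
    set B := {v : ℝ | ∃ x lam zeta delta iota,
        MILPFeasible I ξ a b xbar M x lam zeta delta iota ∧
        v = MILPObj ξ lam zeta} with hB
    have hAne : A.Nonempty :=
      ⟨h (fun _ => 0), fun _ => 0, fun j => ⟨le_refl _, (hxbar j).le⟩, rfl⟩
    have hAB : A ⊆ B := by
      rintro v ⟨x, hx, rfl⟩
      obtain ⟨lam, zeta, delta, iota, hfeas, hobj⟩ := key1 x hx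
      exact ⟨x, lam, zeta, delta, iota, hfeas, hobj.symm⟩
    have hAbdd : BddBelow A := by
      refine ⟨L, ?_⟩
      rintro v ⟨x, hx, rfl⟩
      exact hL x fun j => (hx j).1
    have hBlow : ∀ v ∈ B, sInf A ≤ v := by
      rintro v ⟨x, lam, zeta, delta, iota, hfeas, rfl⟩
      exact le_trans (csInf_le hAbdd ⟨x, hfeas.1, rfl⟩)
        (keyGE x lam zeta delta iota hfeas)
    exact le_antisymm (le_csInf (hAne.mono hAB) hBlow)
      (csInf_le_csInf ⟨sInf A, hBlow⟩ hAne hAB)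

end MILP
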